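/- arXiv:2112.13247 — 4 statements merged into one kernel-verified Lean document; each statement's English description precedes it below -/
import Mathlib

section
/- The key set-inclusion step of Theorem 2: with Π̄_y ℓ_a = ∫₀¹ h_{y,a}(α) dα where h_{y,a}(α) = sup{ℓ_a(ϑ) : π_y(ϑ) > α}, and L_a(y,θ) = h_{y,a}(π_y(θ)) > 0, if Π̄_y ℓ_a ≤ α L_a(y,θ) for some action a, then π_y(θ) ≤ α. -/
open Set MeasureTheory

/- An antitone function is at least `h t` on `(0, t)`, so `t * h t ≤ ∫₀ᵗ h`; as `h ≥ 0` this is at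
most `∫₀¹ h`. Hence `π θ * h (π θ) ≤ α * h (π θ)`, and `h (π θ) > 0` can be cancelled. -/

theorem mul_le_setIntegral_Ioo_of_antitoneOn {h : ℝ → ℝ} {a t : ℝ} (hat : a ≤ t)
    (hanti : AntitoneOn h (Icc a t)) (hint : IntegrableOn h (Ioo a t)) :
    h t * (t - a) ≤ ∫ β in Ioo a t, h β := by
  have hbound : ∀ β ∈ Ioo a t, h t ≤ h β := fun β hβ =>
    hanti (Ioo_subset_Icc_self hβ) (right_mem_Icc.2 hat) hβ.2.le
  simpa [Real.volume_real_Ioo_of_le hat] using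
    setIntegral_ge_of_const_le_real measurableSet_Ioo measure_Ioo_lt_top.ne hbound hint

theorem mul_le_setIntegral_Ioo_of_antitoneOn_of_nonneg {h : ℝ → ℝ} {a b t : ℝ}
    (ht : t ∈ Icc a b) (hanti : AntitoneOn h (Icc a b)) (hint : IntegrableOn h (Ioo a b))
    (hnn : ∀ β ∈ Ioo a b, 0 ≤ h β) :
    h t * (t - a) ≤ ∫ β in Ioo a b, h β := by
  have hsub : Ioo a t ⊆ Ioo a b := Ioo_subset_Ioo_right ht.2
  calc h t * (t - a) ≤ ∫ β in Ioo a t, h β :=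
        mul_le_setIntegral_Ioo_of_antitoneOn ht.1
          (hanti.mono (Icc_subset_Icc_right ht.2)) (hint.mono_set hsub)
    _ ≤ ∫ β in Ioo a b, h β :=
        setIntegral_mono_set hint ((ae_restrict_iff' measurableSet_Ioo).2 (.of_forall hnn))
          (.of_forall hsub)

theorem choquet_small_implies_contour_small_general
    {Θ : Type*} (π : Θ → ℝ) (ℓ : Θ → ℝ)
    (hπ0 : ∀ ϑ, 0 ≤ π ϑ) (hπ1 : ∀ ϑ, π ϑ ≤ 1) (hℓ : ∀ ϑ, 0 ≤ ℓ ϑ)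
    (h : ℝ → ℝ) (hdef : ∀ α, h α = ⨆ ϑ ∈ {ϑ : Θ | π ϑ > α}, ℓ ϑ)
    (hanti : AntitoneOn h (Icc (0 : ℝ) 1))
    (hint : IntegrableOn h (Ioo (0 : ℝ) 1))
    (θ : Θ) (hLpos : 0 < h (π θ))
    (α : ℝ)
    (hsmall : (∫ β in Ioo (0 : ℝ) 1, h β) ≤ α * h (π θ)) :
    π θ ≤ α := by
  have hnn : ∀ β, 0 ≤ h β := fun β =>
    (hdef β).symm ▸ Real.iSup_nonneg fun ϑ => Real.iSup_nonneg fun _ => hℓ ϑ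
  have hkey : h (π θ) * π θ ≤ h (π θ) * α := by
    simpa [mul_comm] using (mul_le_setIntegral_Ioo_of_antitoneOn_of_nonneg
      ⟨hπ0 θ, hπ1 θ⟩ hanti hint fun β _ => hnn β).trans hsmall
  exact le_of_mul_le_mul_left hkey hLpos

theorem choquet_small_implies_contour_small
    {Θ : Type*} [Nonempty Θ] (π : Θ → ℝ) (ℓ : Θ → ℝ)
    (hπ0 : ∀ ϑ, 0 ≤ π ϑ) (hπ1 : ∀ ϑ, π ϑ ≤ 1) (hℓ : ∀ ϑ, 0 ≤ ℓ ϑ)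
    (h : ℝ → ℝ) (hdef : ∀ α, h α = ⨆ ϑ ∈ {ϑ : Θ | π ϑ > α}, ℓ ϑ)
    (hanti : AntitoneOn h (Icc (0 : ℝ) 1))
    (hint : IntegrableOn h (Ioo (0 : ℝ) 1))
    (θ : Θ) (hLpos : 0 < h (π θ))
    (α : ℝ) (hα : α ∈ Icc (0 : ℝ) 1)
    (hsmall : (∫ β in Ioo (0 : ℝ) 1, h β) ≤ α * h (π θ)) :
    π θ ≤ α :=
  choquet_small_implies_contour_small_general π ℓ hπ0 hπ1 hℓ h hdef hanti hint θ hLpos α hsmall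
end

section
/- Characterization of the credal set of a possibility measure via coverage of level sets (Theorem 1 / Destercke–Dubois): let π : Θ → [0,1] be a possibility contour with sup π = 1, Π̄(A) = sup_{ϑ∈A} π(ϑ), and C_α = {ϑ : π(ϑ) > α}. A (Borel) probability measure Q on Θ satisfies Q(A) ≤ Π̄(A) for all Borel sets A if and only if Q(C_α) ≥ 1 − α for all α ∈ [0,1]. -/
open Set MeasureTheory

theorem credal_set_characterization
    {Θ : Type*} [TopologicalSpace Θ] [PolishSpace Θ]
    [MeasurableSpace Θ] [BorelSpace Θ]
    (π : Θ → ℝ) (husc : UpperSemicontinuous π)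
    (hπ0 : ∀ ϑ, 0 ≤ π ϑ) (hπ1 : ∀ ϑ, π ϑ ≤ 1)
    (hsup : (⨆ ϑ, π ϑ) = 1)
    (Q : Measure Θ) [IsProbabilityMeasure Q] :
    (∀ A : Set Θ, MeasurableSet A → Q A ≤ ENNReal.ofReal (⨆ ϑ ∈ A, π ϑ)) ↔
    (∀ α ∈ Icc (0 : ℝ) 1, ENNReal.ofReal (1 - α) ≤ Q {ϑ | π ϑ > α}) := by
  have hmeas : Measurable π := husc.measurable
  constructor
  · rintro h α ⟨hα0, hα1⟩
    have hB : MeasurableSet {ϑ | π ϑ ≤ α} := measurableSet_le hmeas measurable_const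
    have hQB : Q {ϑ | π ϑ ≤ α} ≤ ENNReal.ofReal α := by
      refine le_trans (h _ hB) (ENNReal.ofReal_le_ofReal ?_)
      exact Real.iSup_le (fun ϑ => Real.iSup_le (fun hϑ => hϑ) hα0) hα0
    have hcompl : {ϑ | π ϑ > α} = {ϑ | π ϑ ≤ α}ᶜ := by
      ext ϑ; simp [not_le]
    rw [hcompl, prob_compl_eq_one_sub hB]
    refine ENNReal.le_sub_of_add_le_right (measure_ne_top Q _) ?_
    calc ENNReal.ofReal (1 - α) + Q {ϑ | π ϑ ≤ α}
        ≤ ENNReal.ofReal (1 - α) + ENNReal.ofReal α := add_le_add le_rfl hQB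
      _ = ENNReal.ofReal 1 := by
          rw [← ENNReal.ofReal_add (by linarith) hα0]; ring_nf
      _ = 1 := by simp
  · intro h A _
    set s := ⨆ ϑ ∈ A, π ϑ with hs_def
    have hbdd : BddAbove (range fun ϑ => ⨆ _ : ϑ ∈ A, π ϑ) := by
      refine ⟨1, ?_⟩
      rintro x ⟨ϑ, rfl⟩
      exact Real.iSup_le (fun _ => hπ1 ϑ) zero_le_one
    have hs0 : 0 ≤ s := Real.iSup_nonneg fun ϑ => Real.iSup_nonneg fun _ => hπ0 ϑ
    have hs1 : s ≤ 1 := Real.iSup_le (fun ϑ => Real.iSup_le (fun _ => hπ1 ϑ) zero_le_one) zero_le_one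
    have hsub : A ⊆ {ϑ | π ϑ ≤ s} := by
      intro ϑ hϑ
      have : (⨆ _ : ϑ ∈ A, π ϑ) = π ϑ := by
        haveI : Nonempty (ϑ ∈ A) := ⟨hϑ⟩
        exact ciSup_const
      calc π ϑ = ⨆ _ : ϑ ∈ A, π ϑ := this.symm
        _ ≤ s := le_ciSup hbdd ϑ
    have hgt : MeasurableSet {ϑ | π ϑ > s} := measurableSet_lt measurable_const hmeas
    have hle : {ϑ | π ϑ ≤ s} = {ϑ | π ϑ > s}ᶜ := by ext ϑ; simp [not_lt]
    calc Q A ≤ Q {ϑ | π ϑ ≤ s} := measure_mono hsub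
      _ = 1 - Q {ϑ | π ϑ > s} := by rw [hle, prob_compl_eq_one_sub hgt]
      _ ≤ 1 - ENNReal.ofReal (1 - s) := tsub_le_tsub_left (h s ⟨hs0, hs1⟩) 1
      _ = ENNReal.ofReal s := by
          rw [show (1 : ENNReal) = ENNReal.ofReal 1 by simp,
            ← ENNReal.ofReal_sub _ (by linarith)]
          ring_nf
end

section
/- Choquet integral upper-expectation bound: if Q is a probability measure on Θ with Q({ϑ : π(ϑ) > α}) ≥ 1 − α for all α ∈ [0,1], and ℓ : Θ → [0,∞) is measurable, then the ordinary expectation satisfies ∫ ℓ dQ ≤ ∫₀¹ sup{ℓ(ϑ) : π(ϑ) > α} dα, i.e., the Choquet integral of ℓ with respect to the possibility measure dominates the Q-expectation of ℓ. -/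
/-!
By the layer-cake formula both sides are integrals over `t > 0` of tail measures, so it suffices
to compare `Q {ℓ > t}` with the Lebesgue measure of `{α ∈ (0, 1) | h α > t}`. If
`α < Q {ℓ > t}`, then `Q {π > α} ≥ 1 - α` forces `{π > α}` to meet `{ℓ > t}`, whence `h α > t`;
so the second set contains the interval `(0, Q {ℓ > t})`.
-/

open Set MeasureTheory

theorem le_biSup_of_bddAbove_image {ι α : Type*} [ConditionallyCompleteLattice α] {f : ι → α}
    {s : Set ι} (hs : BddAbove (f '' s)) {i : ι} (hi : i ∈ s) : f i ≤ ⨆ j ∈ s, f j :=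
  le_ciSup₂ (f := fun j (_ : j ∈ s) ↦ f j) (by convert hs using 1; ext; simp) i hi

theorem integral_le_integral_of_measure_lt_le {α β : Type*} [MeasurableSpace α]
    [MeasurableSpace β] {μ : Measure α} {ν : Measure β} {f : α → ℝ} {g : β → ℝ}
    (hf0 : 0 ≤ᵐ[μ] f) (hf : AEStronglyMeasurable f μ) (hg0 : 0 ≤ᵐ[ν] g) (hg : Integrable g ν)
    (hfg : ∀ t > 0, μ {x | t < f x} ≤ ν {x | t < g x}) :
    ∫ x, f x ∂μ ≤ ∫ x, g x ∂ν := by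
  have hg_fin : ∫⁻ x, ENNReal.ofReal (g x) ∂ν ≠ ⊤ := hg.lintegral_lt_top.ne
  rw [integral_eq_lintegral_of_nonneg_ae hf0 hf, integral_eq_lintegral_of_nonneg_ae hg0 hg.1]
  refine ENNReal.toReal_mono hg_fin ?_
  rw [lintegral_eq_lintegral_meas_lt μ hf0 hf.aemeasurable,
    lintegral_eq_lintegral_meas_lt ν hg0 hg.aemeasurable]
  exact setLIntegral_mono' measurableSet_Ioi hfg

theorem measure_lt_le_volume_lt {Θ : Type*} [MeasurableSpace Θ] {Q : Measure Θ}
    [IsProbabilityMeasure Q] {π ℓ : Θ → ℝ} {h : ℝ → ℝ} (hℓ : Measurable ℓ)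
    (hcov : ∀ α ∈ Ioo (0 : ℝ) 1, ENNReal.ofReal (1 - α) ≤ Q {ϑ | α < π ϑ})
    (hh : ∀ α ∈ Ioo (0 : ℝ) 1, ∀ ϑ, α < π ϑ → ℓ ϑ ≤ h α) (t : ℝ) :
    Q {ϑ | t < ℓ ϑ} ≤ volume.restrict (Ioo (0 : ℝ) 1) {α | t < h α} := by
  set p := Q.real {ϑ | t < ℓ ϑ}
  have hp1 : p ≤ 1 := measureReal_le_one
  have hsub : Ioo 0 p ⊆ {α | t < h α} ∩ Ioo 0 1 := by
    intro α ⟨hα0, hαp⟩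
    have hα : α ∈ Ioo (0 : ℝ) 1 := ⟨hα0, hαp.trans_le hp1⟩
    have hmass : Q univ < Q {ϑ | α < π ϑ} + Q {ϑ | t < ℓ ϑ} := by
      calc Q univ = ENNReal.ofReal 1 := by simp
        _ < ENNReal.ofReal (1 - α) + ENNReal.ofReal p := by
          rw [← ENNReal.ofReal_add (by linarith [hα.2]) measureReal_nonneg]
          exact (ENNReal.ofReal_lt_ofReal_iff (by linarith)).2 (by linarith)
        _ ≤ Q {ϑ | α < π ϑ} + Q {ϑ | t < ℓ ϑ} := by
          rw [ofReal_measureReal]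
          exact add_le_add_left (hcov α hα) _
    obtain ⟨ϑ, hϑπ, hϑℓ⟩ := nonempty_inter_of_measure_lt_add Q
      (measurableSet_lt measurable_const hℓ) (subset_univ _) (subset_univ _) hmass
    exact ⟨hϑℓ.trans_le (hh α hα ϑ hϑπ), hα⟩
  calc Q {ϑ | t < ℓ ϑ} = volume (Ioo 0 p) := by simp [p]
    _ ≤ volume ({α | t < h α} ∩ Ioo 0 1) := measure_mono hsub
    _ = volume.restrict (Ioo (0 : ℝ) 1) {α | t < h α} :=
      (Measure.restrict_apply' measurableSet_Ioo).symm

theorem choquet_dominates_expectation_general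
    {Θ : Type*} [MeasurableSpace Θ]
    (π : Θ → ℝ)
    (Q : Measure Θ) [IsProbabilityMeasure Q]
    (hcov : ∀ α ∈ Icc (0 : ℝ) 1, ENNReal.ofReal (1 - α) ≤ Q {ϑ | π ϑ > α})
    (ℓ : Θ → ℝ) (hℓmeas : Measurable ℓ) (hℓ0 : ∀ ϑ, 0 ≤ ℓ ϑ)
    (h : ℝ → ℝ) (hdef : ∀ α, h α = ⨆ ϑ ∈ {ϑ : Θ | π ϑ > α}, ℓ ϑ)
    (hbdd : ∀ α ∈ Ico (0 : ℝ) 1, BddAbove (ℓ '' {ϑ : Θ | π ϑ > α}))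
    (hint : IntegrableOn h (Ioo (0 : ℝ) 1)) :
    ∫ ϑ, ℓ ϑ ∂Q ≤ ∫ α in Ioo (0 : ℝ) 1, h α := by
  have hh : ∀ α ∈ Ioo (0 : ℝ) 1, ∀ ϑ, α < π ϑ → ℓ ϑ ≤ h α := fun α hα ϑ hϑ ↦
    hdef α ▸ le_biSup_of_bddAbove_image (hbdd α (Ioo_subset_Ico_self hα)) hϑ
  have hh0 : ∀ α, 0 ≤ h α := fun α ↦
    hdef α ▸ Real.iSup_nonneg fun ϑ ↦ Real.iSup_nonneg fun _ ↦ hℓ0 ϑ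
  exact integral_le_integral_of_measure_lt_le (ae_of_all _ hℓ0) hℓmeas.aestronglyMeasurable
    (ae_of_all _ hh0) hint fun t _ ↦
      measure_lt_le_volume_lt hℓmeas (fun α hα ↦ hcov α (Ioo_subset_Icc_self hα)) hh t

theorem choquet_dominates_expectation
    {Θ : Type*} [MeasurableSpace Θ]
    (π : Θ → ℝ) (hmeas : Measurable π)
    (hπ0 : ∀ ϑ, 0 ≤ π ϑ) (hπ1 : ∀ ϑ, π ϑ ≤ 1)
    (Q : Measure Θ) [IsProbabilityMeasure Q]
    (hcov : ∀ α ∈ Icc (0 : ℝ) 1, ENNReal.ofReal (1 - α) ≤ Q {ϑ | π ϑ > α})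
    (ℓ : Θ → ℝ) (hℓmeas : Measurable ℓ) (hℓ0 : ∀ ϑ, 0 ≤ ℓ ϑ)
    (hℓint : Integrable ℓ Q)
    (h : ℝ → ℝ) (hdef : ∀ α, h α = ⨆ ϑ ∈ {ϑ : Θ | π ϑ > α}, ℓ ϑ)
    (hbdd : ∀ α ∈ Ico (0 : ℝ) 1, BddAbove (ℓ '' {ϑ : Θ | π ϑ > α}))
    (hint : IntegrableOn h (Ioo (0 : ℝ) 1)) :
    ∫ ϑ, ℓ ϑ ∂Q ≤ ∫ α in Ioo (0 : ℝ) 1, h α :=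
  choquet_dominates_expectation_general π Q hcov ℓ hℓmeas hℓ0 h hdef hbdd hint
end

section
/- Closed-form Choquet integral for squared-error loss in the symmetric location model: with π_y(ϑ) = 2(1 − F(|y−ϑ|)) as above and ℓ_a(ϑ) = (a − ϑ)², the Choquet integral Π̄_y ℓ_a = ∫₀¹ sup{(ϑ−a)² : π_y(ϑ) > α} dα equals (y−a)² + 2|y−a|·E|U| + E(U²), where U has distribution function F with mean 0 and finite variance. -/
open Set MeasureTheory Filter Topology
open scoped ENNReal NNReal

/-- Supremum of `(ϑ - a)^2` over the open ball `|y - ϑ| < u`. -/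
lemma sup_ball_sq (y a u : ℝ) (hu : 0 < u) :
    (⨆ ϑ ∈ {ϑ : ℝ | |y - ϑ| < u}, (ϑ - a) ^ 2) = (|y - a| + u) ^ 2 := by
  set s : ℝ := |y - a| + u with hs
  have hs0 : 0 < s := by have := abs_nonneg (y - a); simp only [hs]; linarith
  have hbound : ∀ ϑ : ℝ, |y - ϑ| < u → (ϑ - a) ^ 2 ≤ s ^ 2 := by
    intro ϑ h
    have h1 : |ϑ - a| ≤ s := by
      have h2 : |ϑ - a| ≤ |ϑ - y| + |y - a| := abs_sub_le ϑ y a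
      have h3 : |ϑ - y| = |y - ϑ| := abs_sub_comm ϑ y
      simp only [hs]; rw [h3] at h2; linarith
    calc (ϑ - a) ^ 2 = |ϑ - a| ^ 2 := (sq_abs _).symm
      _ ≤ s ^ 2 := by
          apply pow_le_pow_left₀ (abs_nonneg _) h1
  have hb : ∀ ϑ : ℝ, (⨆ _ : ϑ ∈ {ϑ : ℝ | |y - ϑ| < u}, (ϑ - a) ^ 2) ≤ s ^ 2 := fun ϑ =>
    Real.iSup_le (fun h => hbound ϑ h) (sq_nonneg s)
  have hbdd : BddAbove (range fun ϑ : ℝ => ⨆ _ : ϑ ∈ {ϑ : ℝ | |y - ϑ| < u}, (ϑ - a) ^ 2) := by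
    refine ⟨s ^ 2, ?_⟩
    rintro x ⟨ϑ, rfl⟩
    exact hb ϑ
  apply le_antisymm
  · exact ciSup_le hb
  · apply le_of_forall_pos_le_add
    intro ε hε
    set δ : ℝ := min u (ε / (2 * s)) with hδdef
    have hδ0 : 0 < δ := lt_min hu (by positivity)
    have hδu : δ ≤ u := min_le_left _ _
    have hδε : 2 * s * δ ≤ ε := by
      have h1 : δ ≤ ε / (2 * s) := min_le_right _ _
      have h2 : (0:ℝ) < 2 * s := by linarith
      calc 2 * s * δ ≤ 2 * s * (ε / (2 * s)) := by nlinarith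
        _ = ε := by field_simp
    -- choose a witness ϑ
    obtain ⟨ϑ, hmem, hval⟩ : ∃ ϑ : ℝ, |y - ϑ| < u ∧ (ϑ - a) ^ 2 = (s - δ) ^ 2 := by
      rcases le_or_gt a y with h | h
      · refine ⟨y + (u - δ), ?_, ?_⟩
        · rw [show y - (y + (u - δ)) = -(u - δ) by ring, abs_neg, abs_of_nonneg (by linarith)]
          linarith
        · have : y + (u - δ) - a = s - δ := by
            simp only [hs]; rw [abs_of_nonneg (by linarith)]; ring
          rw [this]
      · refine ⟨y - (u - δ), ?_, ?_⟩
        · rw [show y - (y - (u - δ)) = u - δ by ring, abs_of_nonneg (by linarith)]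
          linarith
        · have : y - (u - δ) - a = -(s - δ) := by
            simp only [hs]; rw [abs_of_neg (by linarith)]; ring
          rw [this, neg_pow, ← neg_pow]  -- fix later if broken
          ring
    have hle : (ϑ - a) ^ 2 ≤ ⨆ ϑ ∈ {ϑ : ℝ | |y - ϑ| < u}, (ϑ - a) ^ 2 := by
      refine le_ciSup_of_le hbdd ϑ ?_
      refine le_ciSup (f := fun _ : ϑ ∈ {ϑ : ℝ | |y - ϑ| < u} => (ϑ - a) ^ 2) ?_ hmem
      exact ⟨(ϑ - a) ^ 2, by rintro x ⟨_, rfl⟩; exact le_refl _⟩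
    have : s ^ 2 ≤ (ϑ - a) ^ 2 + ε := by
      rw [hval]; nlinarith [sq_nonneg δ]
    linarith

/-- Continuity of the CDF implies no atoms. -/
lemma cdf_cont_noatoms (μ : Measure ℝ) [IsProbabilityMeasure μ] (F : ℝ → ℝ)
    (hF : ∀ u, F u = (μ (Iic u)).toReal) (hFcont : Continuous F) (x : ℝ) : μ {x} = 0 := by
  have key : ∀ s : ℝ, s < x → (μ {x}).toReal ≤ F x - F s := by
    intro s hs
    have h1 : μ {x} ≤ μ (Ioc s x) :=
      measure_mono (singleton_subset_iff.2 ⟨hs, le_refl x⟩)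
    have h2 : μ (Iic s) + μ (Ioc s x) = μ (Iic x) := by
      rw [← measure_union (Iic_disjoint_Ioc (le_refl s)) measurableSet_Ioc,
        Iic_union_Ioc_eq_Iic (le_of_lt hs)]
    have h3 : (μ (Ioc s x)).toReal = F x - F s := by
      have := congrArg ENNReal.toReal h2
      rw [ENNReal.toReal_add (measure_ne_top μ _) (measure_ne_top μ _)] at this
      rw [hF x, hF s]; linarith
    rw [← h3]
    exact ENNReal.toReal_mono (measure_ne_top μ _) h1
  have hlim : Tendsto (fun s => F x - F s) (𝓝[<] x) (𝓝 0) := by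
    have : Tendsto F (𝓝[<] x) (𝓝 (F x)) := (hFcont.tendsto x).mono_left nhdsWithin_le_nhds
    have := (tendsto_const_nhds (x := F x) (f := 𝓝[<] x)).sub this
    simpa using this
  have h0 : (μ {x}).toReal ≤ 0 := by
    refine ge_of_tendsto hlim ?_
    filter_upwards [self_mem_nhdsWithin] with s hs using key s hs
  have := ENNReal.toReal_nonneg (a := μ {x})
  have heq : (μ {x}).toReal = 0 := le_antisymm h0 this
  exact (ENNReal.toReal_eq_zero_iff _).1 heq |>.resolve_right (measure_ne_top μ _)

theorem choquet_squared_error_location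
    (μ : Measure ℝ) [IsProbabilityMeasure μ]
    (F : ℝ → ℝ) (hF : ∀ u, F u = (μ (Iic u)).toReal)
    (hFcont : Continuous F) (hFmono : StrictMono F)
    (hF01 : ∀ u, 0 < F u ∧ F u < 1)
    (hsym : ∀ u, F (-u) = 1 - F u)
    (hmean : (∫ u, u ∂μ) = 0)
    (hint1 : Integrable (fun u : ℝ => |u|) μ)
    (hint2 : Integrable (fun u : ℝ => u ^ 2) μ)
    (y a : ℝ)
    (hint : IntegrableOn
      (fun α => ⨆ ϑ ∈ {ϑ : ℝ | 2 * (1 - F |y - ϑ|) > α}, (ϑ - a) ^ 2)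
      (Ioo (0 : ℝ) 1)) :
    (∫ α in Ioo (0 : ℝ) 1, ⨆ ϑ ∈ {ϑ : ℝ | 2 * (1 - F |y - ϑ|) > α}, (ϑ - a) ^ 2) =
      (y - a) ^ 2 + 2 * |y - a| * (∫ u, |u| ∂μ) + ∫ u, u ^ 2 ∂μ := by
  set g : ℝ → ℝ := fun α => ⨆ ϑ ∈ {ϑ : ℝ | 2 * (1 - F |y - ϑ|) > α}, (ϑ - a) ^ 2 with hg
  set c : ℝ := |y - a| with hcdef
  have hc0 : (0:ℝ) ≤ c := abs_nonneg _
  set T : ℝ → ℝ := fun u => 2 * (1 - F u) with hTdef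
  have hTcont : Continuous T := by fun_prop
  have hTmeas : Measurable T := hTcont.measurable
  have hna : ∀ x : ℝ, μ {x} = 0 := cdf_cont_noatoms μ F hF hFcont
  have hμIic : ∀ u : ℝ, μ (Iic u) = ENNReal.ofReal (F u) := fun u => by
    rw [hF u, ENNReal.ofReal_toReal (measure_ne_top μ _)]
  have hF0 : F 0 = 1 / 2 := by have := hsym 0; rw [neg_zero] at this; linarith
  -- μ of Ioi as ofReal
  have half : ENNReal.ofReal (1/2 : ℝ) = 2⁻¹ := by
    rw [ENNReal.ofReal_div_of_pos (by norm_num), ENNReal.ofReal_one, ENNReal.ofReal_ofNat, one_div]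
  have hμIoi : ∀ u : ℝ, μ (Ioi u) = ENNReal.ofReal (1 - F u) := by
    intro u
    rw [← compl_Iic, prob_compl_eq_one_sub measurableSet_Iic, hμIic u,
      ENNReal.ofReal_sub 1 (le_of_lt (hF01 u).1), ENNReal.ofReal_one]
  -- F tends to 1 at +infinity
  have hF1 : Tendsto F atTop (𝓝 1) := by
    have h1 : Tendsto (fun x : ℝ => μ (Iic x)) atTop (𝓝 (μ univ)) :=
      tendsto_measure_Iic_atTop μ
    rw [measure_univ] at h1
    have h2 := (ENNReal.tendsto_toReal (a := 1) (by simp)).comp h1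
    have h3 : (ENNReal.toReal ∘ fun x : ℝ => μ (Iic x)) = F := by
      ext u; simp [Function.comp, ← hF u]
    rw [h3] at h2
    simpa using h2
  -- surjectivity of F onto (1/2, 1)
  have hsurj : ∀ t : ℝ, 0 < t → t < 1 → ∃ q : ℝ, 0 < q ∧ F q = 1 - t / 2 := by
    intro t ht0 ht1
    have hhalf : (1:ℝ)/2 < 1 - t/2 := by linarith
    have hev : ∀ᶠ x : ℝ in atTop, 1 - t/2 < F x :=
      hF1.eventually (eventually_gt_nhds (by linarith))
    obtain ⟨x, hx, hx0⟩ := (hev.and (eventually_ge_atTop (0:ℝ))).exists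
    obtain ⟨q, hq, hFq⟩ := intermediate_value_Icc hx0 hFcont.continuousOn
      (show (1 - t/2) ∈ Icc (F 0) (F x) from ⟨by rw [hF0]; linarith, le_of_lt hx⟩)
    refine ⟨q, ?_, hFq⟩
    by_contra h
    push_neg at h
    have : F q ≤ F 0 := hFmono.monotone h
    rw [hF0, hFq] at this; linarith
  -- the pushforward identity
  have hmap : (μ.restrict (Ioi 0)).map T = (2⁻¹ : ℝ≥0∞) • (volume.restrict (Ioo (0:ℝ) 1)) := by
    refine Measure.ext_of_Iic _ _ (fun t => ?_)
    rw [Measure.map_apply hTmeas measurableSet_Iic,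
      Measure.restrict_apply' measurableSet_Ioi, Measure.smul_apply,
      Measure.restrict_apply' measurableSet_Ioo]
    rcases le_or_gt t 0 with ht | ht
    · have h1 : T ⁻¹' Iic t ∩ Ioi 0 = ∅ := by
        ext u
        simp only [mem_inter_iff, mem_preimage, mem_Iic, mem_Ioi, mem_empty_iff_false,
          iff_false, not_and]
        intro hTu
        exfalso
        have := (hF01 u).2
        simp only [hTdef] at hTu
        linarith
      have h2 : Iic t ∩ Ioo (0:ℝ) 1 = ∅ := by
        refine eq_empty_iff_forall_notMem.2 ?_
        rintro α ⟨hα, h0, -⟩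
        linarith [mem_Iic.1 hα]
      rw [h1, h2]; simp
    rcases le_or_gt 1 t with ht1 | ht1
    · have h1 : T ⁻¹' Iic t ∩ Ioi 0 = Ioi 0 := by
        apply inter_eq_right.2
        intro u hu
        simp only [mem_preimage, mem_Iic, hTdef]
        have : F 0 < F u := hFmono hu
        rw [hF0] at this
        linarith
      have h2 : Iic t ∩ Ioo (0:ℝ) 1 = Ioo 0 1 := by
        apply inter_eq_right.2
        intro α hα
        exact le_trans (le_of_lt hα.2) ht1
      rw [h1, h2, hμIoi 0, hF0, Real.volume_Ioo,
        show (1:ℝ) - 1/2 = 1/2 by norm_num, half]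
      norm_num
    · obtain ⟨q, hq0, hFq⟩ := hsurj t ht ht1
      have h1 : T ⁻¹' Iic t ∩ Ioi 0 = Ici q := by
        ext u
        simp only [mem_inter_iff, mem_preimage, mem_Iic, mem_Ioi, mem_Ici, hTdef]
        constructor
        · rintro ⟨h1, _⟩
          have : F q ≤ F u := by rw [hFq]; linarith
          exact (hFmono.le_iff_le).1 this
        · intro h1
          have : F q ≤ F u := hFmono.monotone h1
          rw [hFq] at this
          exact ⟨by linarith, lt_of_lt_of_le hq0 h1⟩
      have h2 : Iic t ∩ Ioo (0:ℝ) 1 = Ioc 0 t := by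
        ext α
        simp only [mem_inter_iff, mem_Iic, mem_Ioo, mem_Ioc]
        constructor
        · rintro ⟨hα, h2, _⟩; exact ⟨h2, hα⟩
        · rintro ⟨h2, hα⟩; exact ⟨hα, h2, lt_of_le_of_lt hα ht1⟩
      rw [h1, h2, Real.volume_Ioc]
      have h3 : μ (Ici q) = μ (Ioi q) := (measure_congr (Ioi_ae_eq_Ici' (hna q))).symm
      rw [h3, hμIoi q, hFq]
      rw [show (1:ℝ) - (1 - t/2) = t/2 by ring,
        show t/2 = (1/2) * t by ring, ENNReal.ofReal_mul (by norm_num), half,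
        smul_eq_mul, sub_zero]
  -- pointwise identification of g ∘ T on (0,∞)
  have hgT : ∀ u ∈ Ioi (0:ℝ), g (T u) = (c + u) ^ 2 := by
    intro u hu
    rw [mem_Ioi] at hu
    have hset : {ϑ : ℝ | 2 * (1 - F |y - ϑ|) > T u} = {ϑ : ℝ | |y - ϑ| < u} := by
      ext ϑ
      simp only [mem_setOf_eq, gt_iff_lt, hTdef]
      constructor
      · intro h
        have h2 : F |y - ϑ| < F u := by linarith
        exact hFmono.lt_iff_lt.1 h2
      · intro h
        have h2 := hFmono h
        linarith
    simp only [hg, hset]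
    exact sup_ball_sq y a u hu
  have hrestr : volume.restrict (Ioo (0:ℝ) 1) = (2 : ℝ≥0∞) • ((μ.restrict (Ioi 0)).map T) := by
    rw [hmap, smul_smul, ENNReal.mul_inv_cancel (by norm_num) (by norm_num), one_smul]
  have hIntmap : Integrable g (((μ.restrict (Ioi 0)).map T)) := by
    rw [hmap]
    exact hint.smul_measure (by norm_num)
  have step1 : (∫ α in Ioo (0:ℝ) 1, g α) = 2 * ∫ u in Ioi (0:ℝ), (c + u) ^ 2 ∂μ := by
    calc (∫ α in Ioo (0:ℝ) 1, g α)
        = ∫ α, g α ∂((2 : ℝ≥0∞) • ((μ.restrict (Ioi 0)).map T)) := by rw [← hrestr]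
      _ = 2 * ∫ α, g α ∂((μ.restrict (Ioi 0)).map T) := by
          rw [integral_smul_measure, ENNReal.toReal_ofNat, smul_eq_mul]
      _ = 2 * ∫ u, g (T u) ∂(μ.restrict (Ioi 0)) := by
          rw [integral_map hTmeas.aemeasurable hIntmap.aestronglyMeasurable]
      _ = 2 * ∫ u in Ioi (0:ℝ), (c + u) ^ 2 ∂μ := by
          congr 1
          exact setIntegral_congr_fun measurableSet_Ioi hgT
  -- symmetry of μ
  have hmapneg : μ.map (fun u : ℝ => -u) = μ := by
    refine Measure.ext_of_Iic _ _ (fun t => ?_)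
    rw [Measure.map_apply measurable_neg measurableSet_Iic]
    have hpre : (fun u : ℝ => -u) ⁻¹' Iic t = Ici (-t) := by
      ext u; simp only [mem_preimage, mem_Iic, mem_Ici, neg_le]
    rw [hpre, measure_congr (Ioi_ae_eq_Ici' (hna (-t))).symm, hμIoi, hsym, hμIic,
      sub_sub_cancel]
  have hfun : (fun u : ℝ => (c + |u|) ^ 2) = fun u => (c ^ 2 + 2 * c * |u|) + u ^ 2 := by
    ext u
    rw [add_sq, sq_abs u]
  have hφcont : Continuous (fun u : ℝ => (c + |u|) ^ 2) := by fun_prop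
  have hφint : Integrable (fun u : ℝ => (c + |u|) ^ 2) μ := by
    rw [hfun]
    exact ((integrable_const _).add (hint1.const_mul _)).add hint2
  have hsymInt : ∫ u in Ioi (0:ℝ), (c + |u|) ^ 2 ∂μ = ∫ u in Iio (0:ℝ), (c + |u|) ^ 2 ∂μ := by
    conv_lhs => rw [← hmapneg]
    rw [setIntegral_map measurableSet_Ioi hφcont.aestronglyMeasurable
      measurable_neg.aemeasurable]
    have hpre : (fun u : ℝ => -u) ⁻¹' Ioi 0 = Iio 0 := by
      ext u; simp
    rw [hpre]
    refine setIntegral_congr_fun measurableSet_Iio (fun u hu => ?_)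
    rw [abs_neg]
  have hsplit : (∫ u in Ioi (0:ℝ), (c + |u|) ^ 2 ∂μ) + ∫ u in Iio (0:ℝ), (c + |u|) ^ 2 ∂μ
      = ∫ u, (c + |u|) ^ 2 ∂μ := by
    rw [add_comm, ← setIntegral_union ((Iic_disjoint_Ioi (le_refl (0:ℝ))).mono_left Iio_subset_Iic_self) measurableSet_Ioi
      hφint.integrableOn hφint.integrableOn, Iio_union_Ioi,
      setIntegral_congr_set (ae_eq_univ.2 (by rw [compl_compl]; exact hna 0)),
      setIntegral_univ]
  have hon : ∫ u in Ioi (0:ℝ), (c + u) ^ 2 ∂μ = ∫ u in Ioi (0:ℝ), (c + |u|) ^ 2 ∂μ := by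
    refine setIntegral_congr_fun measurableSet_Ioi (fun u hu => ?_)
    rw [abs_of_pos (mem_Ioi.1 hu)]
  have hexp : ∫ u, (c + |u|) ^ 2 ∂μ = c ^ 2 + 2 * c * (∫ u, |u| ∂μ) + ∫ u, u ^ 2 ∂μ := by
    have hIa : Integrable (fun u : ℝ => 2 * c * |u|) μ := hint1.const_mul _
    have hIb : Integrable (fun u : ℝ => c ^ 2 + 2 * c * |u|) μ := (integrable_const _).add hIa
    rw [hfun, integral_add hIb hint2, integral_add (integrable_const (c ^ 2)) hIa,
      integral_const, integral_const_mul]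
    simp
  calc (∫ α in Ioo (0:ℝ) 1, g α) = 2 * ∫ u in Ioi (0:ℝ), (c + u) ^ 2 ∂μ := step1
    _ = (∫ u in Ioi (0:ℝ), (c + |u|) ^ 2 ∂μ) + ∫ u in Iio (0:ℝ), (c + |u|) ^ 2 ∂μ := by
        rw [hon, ← hsymInt]; ring
    _ = ∫ u, (c + |u|) ^ 2 ∂μ := hsplit
    _ = c ^ 2 + 2 * c * (∫ u, |u| ∂μ) + ∫ u, u ^ 2 ∂μ := hexp
    _ = (y - a) ^ 2 + 2 * |y - a| * (∫ u, |u| ∂μ) + ∫ u, u ^ 2 ∂μ := by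
        rw [hcdef, sq_abs]
end
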